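/- arXiv:2112.03191 — 2 statements merged into one kernel-verified Lean document; each statement's English description precedes it below -/
import Mathlib

section
/- For every natural number n there exists a constant c > 0 such that (∫_ℝ σ(x) e^{−μx²} dx)^{n/2} = (π/μ)^{n/4} + O(e^{−cμ}) as μ → +∞, where the powers are real powers (well defined since the integral and π/μ are positive for μ > 0). -/
open MeasureTheory Filter Asymptotics Real

/-- Key elementary inequality: for `0 < t ≤ 1` and `p ≥ 0`,
`1 - t^p ≤ (p+1)(1-t)`. -/
lemma one_sub_rpow_le_aux {t p : ℝ} (hp : 0 ≤ p) (ht0 : 0 < t) (ht1 : t ≤ 1) :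
    1 - t ^ p ≤ (p + 1) * (1 - t) := by
  rcases le_total p 1 with hp1 | hp1
  · have h : t ^ (1 : ℝ) ≤ t ^ p := Real.rpow_le_rpow_of_exponent_ge ht0 ht1 hp1
    rw [Real.rpow_one] at h
    nlinarith
  · have h := one_add_mul_self_le_rpow_one_add (s := t - 1) (by linarith) hp1
    have h' : (1 : ℝ) + (t - 1) = t := by ring
    rw [h'] at h
    nlinarith

set_option maxHeartbeats 1000000 in
/-- For every `n : ℕ` there is a constant `c > 0` such that
`(∫ σ(x) e^{-μ x²} dx)^{n/2} = (π/μ)^{n/4} + O(e^{-cμ})` as `μ → +∞`,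
where the powers are real powers. -/
theorem stmt_3 (r : ℝ) (hr : 0 < r) (σ : ℝ → ℝ) (hσ_meas : Measurable σ)
    (hσ_nonneg : ∀ x, 0 ≤ σ x) (hσ_le_one : ∀ x, σ x ≤ 1)
    (hσ_one : ∀ x, |x| ≤ r → σ x = 1) (hσ_zero : ∀ x, 2 * r ≤ |x| → σ x = 0)
    (n : ℕ) :
    ∃ c : ℝ, 0 < c ∧
      (fun μ : ℝ =>
          (∫ x : ℝ, σ x * Real.exp (-μ * x ^ 2)) ^ ((n : ℝ) / 2)
            - (π / μ) ^ ((n : ℝ) / 4))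
        =O[atTop] fun μ : ℝ => Real.exp (-c * μ) := by
  set p : ℝ := (n : ℝ) / 2 with hp_def
  have hp0 : 0 ≤ p := by positivity
  refine ⟨r ^ 2 / 2, by positivity, ?_⟩
  rw [isBigO_iff]
  refine ⟨(p + 1) * 2, ?_⟩
  have h0 : ∀ᶠ μ : ℝ in atTop, Real.exp (-(r ^ 2 / 2) * μ) < 1 / 2 := by
    have ht : Tendsto (fun μ : ℝ => Real.exp (-(r ^ 2 / 2) * μ)) atTop (nhds 0) := by
      have h1 : Tendsto (fun μ : ℝ => r ^ 2 / 2 * μ) atTop atTop :=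
        Tendsto.const_mul_atTop (by positivity) tendsto_id
      have h := Real.tendsto_exp_neg_atTop_nhds_zero.comp h1
      exact h.congr fun μ => by simp [Function.comp, neg_mul]
    exact ht.eventually_lt_const (by norm_num)
  filter_upwards [eventually_ge_atTop (max π 1), h0] with μ hμ hexp
  have hμ1 : (1 : ℝ) ≤ μ := le_trans (le_max_right _ _) hμ
  have hμπ : π ≤ μ := le_trans (le_max_left _ _) hμ
  have hμ0 : (0 : ℝ) < μ := lt_of_lt_of_le one_pos hμ1
  set E : ℝ := Real.exp (-(r ^ 2 / 2) * μ) with hE_def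
  have hE0 : 0 < E := Real.exp_pos _
  set a : ℝ := ∫ x : ℝ, σ x * Real.exp (-μ * x ^ 2) with ha_def
  set b : ℝ := Real.sqrt (π / μ) with hb_def
  have hπμ0 : (0 : ℝ) < π / μ := by positivity
  have hb0 : 0 < b := Real.sqrt_pos.mpr hπμ0
  have hgauss : (∫ x : ℝ, Real.exp (-μ * x ^ 2)) = b := integral_gaussian μ
  have hint : Integrable fun x : ℝ => Real.exp (-μ * x ^ 2) :=
    integrable_exp_neg_mul_sq hμ0
  have hintσ : Integrable fun x : ℝ => σ x * Real.exp (-μ * x ^ 2) := by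
    refine hint.mono' ?_ ?_
    · exact (hσ_meas.mul (by fun_prop)).aestronglyMeasurable
    · filter_upwards with x
      have h1 := hσ_nonneg x
      have h2 := hσ_le_one x
      have h3 := (Real.exp_pos (-μ * x ^ 2)).le
      rw [Real.norm_eq_abs, abs_mul, abs_of_nonneg h1, abs_of_nonneg h3]
      nlinarith
  have ha0 : 0 ≤ a := by
    apply integral_nonneg
    intro x
    exact mul_nonneg (hσ_nonneg x) (Real.exp_pos _).le
  have ha_le : a ≤ b := by
    rw [← hgauss]
    apply integral_mono hintσ hint
    intro x
    show σ x * Real.exp (-μ * x ^ 2) ≤ Real.exp (-μ * x ^ 2)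
    have h2 := hσ_le_one x
    have h3 := (Real.exp_pos (-μ * x ^ 2)).le
    nlinarith [mul_nonneg (sub_nonneg.mpr h2) h3]
  -- gap bound
  have hhalf : Integrable fun x : ℝ => Real.exp (-(μ / 2) * x ^ 2) :=
    integrable_exp_neg_mul_sq (by positivity)
  have hgap : b - a ≤ E * Real.sqrt (π / (μ / 2)) := by
    have hba : b - a = ∫ x : ℝ, ((1 - σ x) * Real.exp (-μ * x ^ 2)) := by
      rw [← hgauss, ha_def, ← integral_sub hint hintσ]
      congr 1
      funext x
      ring
    rw [hba]
    have hle : ∀ x : ℝ,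
        (1 - σ x) * Real.exp (-μ * x ^ 2) ≤ E * Real.exp (-(μ / 2) * x ^ 2) := by
      intro x
      rcases le_or_gt |x| r with hx | hx
      · rw [hσ_one x hx]
        have := (Real.exp_pos (-(μ / 2) * x ^ 2)).le
        nlinarith
      · have hr2 : r ^ 2 ≤ x ^ 2 := by
          have := abs_nonneg x
          nlinarith [sq_abs x]
        have hsplit : Real.exp (-μ * x ^ 2) ≤ E * Real.exp (-(μ / 2) * x ^ 2) := by
          rw [hE_def, ← Real.exp_add]
          apply Real.exp_le_exp.mpr
          nlinarith
        have h1 := hσ_nonneg x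
        have h2 := hσ_le_one x
        have h3 := (Real.exp_pos (-μ * x ^ 2)).le
        nlinarith
    calc (∫ x : ℝ, (1 - σ x) * Real.exp (-μ * x ^ 2))
        ≤ ∫ x : ℝ, E * Real.exp (-(μ / 2) * x ^ 2) := by
          apply integral_mono (hint.sub hintσ |>.congr ?_) (hhalf.const_mul E) hle
          filter_upwards with x
          simp only [Pi.sub_apply]
          ring
      _ = E * Real.sqrt (π / (μ / 2)) := by
          rw [integral_const_mul, integral_gaussian]
  clear_value a b E
  have hsqrt2 : Real.sqrt (π / (μ / 2)) = Real.sqrt 2 * b := by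
    rw [hb_def, ← Real.sqrt_mul (by norm_num : (0:ℝ) ≤ 2)]
    congr 1
    field_simp
  have hs2 : Real.sqrt 2 ≤ 2 := by
    nlinarith [Real.sq_sqrt (by norm_num : (0:ℝ) ≤ 2), Real.sqrt_nonneg 2]
  have hgap' : b - a ≤ Real.sqrt 2 * b * E := by
    rw [hsqrt2] at hgap; nlinarith [Real.sqrt_nonneg 2]
  have ha_pos : 0 < a := by
    have h1 : Real.sqrt 2 * b * E ≤ 2 * b * E := by
      nlinarith [Real.sqrt_nonneg 2, mul_pos hb0 hE0]
    have h2 : 2 * b * E < 2 * b * (1 / 2) :=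
      mul_lt_mul_of_pos_left hexp (by positivity)
    linarith
  -- t := a / b
  set t : ℝ := a / b with ht_def
  have ht0 : 0 < t := div_pos ha_pos hb0
  have ht1 : t ≤ 1 := div_le_one_of_le₀ ha_le hb0.le
  have hkey := one_sub_rpow_le_aux hp0 ht0 ht1
  have h1t : 1 - t ≤ Real.sqrt 2 * E := by
    have hdiv : (b - a) / b ≤ Real.sqrt 2 * E := by
      rw [div_le_iff₀ hb0, show Real.sqrt 2 * E * b = Real.sqrt 2 * b * E by ring]
      exact hgap'
    calc 1 - t = (b - a) / b := by rw [ht_def]; field_simp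
      _ ≤ Real.sqrt 2 * E := hdiv
  -- a^p = b^p * t^p
  have hab : a = b * t := by rw [ht_def]; field_simp
  have hap : a ^ p = b ^ p * t ^ p := by
    rw [hab, Real.mul_rpow hb0.le ht0.le]
  have hb1 : b ≤ 1 := by
    rw [hb_def]
    rw [show (1:ℝ) = Real.sqrt 1 by simp]
    apply Real.sqrt_le_sqrt
    rw [div_le_one hμ0]
    exact hμπ
  have hbp1 : b ^ p ≤ 1 := Real.rpow_le_one hb0.le hb1 hp0
  have hbp0 : 0 ≤ b ^ p := Real.rpow_nonneg hb0.le p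
  have htp0 : 0 ≤ t ^ p := Real.rpow_nonneg ht0.le p
  -- rewrite target power
  have hbp : b ^ p = (π / μ) ^ ((n : ℝ) / 4) := by
    rw [hb_def, Real.sqrt_eq_rpow, ← Real.rpow_mul hπμ0.le]
    congr 1
    rw [hp_def]
    ring
  have hap_le : a ^ p ≤ b ^ p := Real.rpow_le_rpow ha0 ha_le hp0
  rw [Real.norm_eq_abs, Real.norm_eq_abs, ← hbp,
    abs_of_nonpos (by linarith), abs_of_nonneg hE0.le]
  have : b ^ p - a ^ p ≤ (p + 1) * 2 * E := by
    rw [hap]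
    have hs20 : (0:ℝ) ≤ Real.sqrt 2 := Real.sqrt_nonneg 2
    have h2 : b ^ p * (1 - t ^ p) ≤ b ^ p * ((p + 1) * (1 - t)) :=
      mul_le_mul_of_nonneg_left hkey hbp0
    have h4 : (p + 1) * (1 - t) ≤ (p + 1) * (Real.sqrt 2 * E) :=
      mul_le_mul_of_nonneg_left h1t (by linarith)
    have hnn : (0:ℝ) ≤ (p + 1) * (Real.sqrt 2 * E) :=
      mul_nonneg (by linarith) (mul_nonneg hs20 hE0.le)
    have h7 : Real.sqrt 2 * E ≤ 2 * E := mul_le_mul_of_nonneg_right hs2 hE0.le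
    calc b ^ p - b ^ p * t ^ p = b ^ p * (1 - t ^ p) := by ring
      _ ≤ b ^ p * ((p + 1) * (1 - t)) := h2
      _ ≤ b ^ p * ((p + 1) * (Real.sqrt 2 * E)) := mul_le_mul_of_nonneg_left h4 hbp0
      _ ≤ 1 * ((p + 1) * (Real.sqrt 2 * E)) := mul_le_mul_of_nonneg_right hbp1 hnn
      _ = (p + 1) * (Real.sqrt 2 * E) := one_mul _
      _ ≤ (p + 1) * (2 * E) := mul_le_mul_of_nonneg_left h7 (by linarith)
      _ = (p + 1) * 2 * E := by ring
  linarith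
end

section
/- If moreover the range of P(t) is finite-dimensional, then the range of P′ is finite-dimensional and dim(range P′) ≤ 2 · dim(range P(t)). -/
/-- If the range of the projection `P(t)` is finite-dimensional, then the range
of the derivative `P′` is finite-dimensional with
`dim (range P′) ≤ 2 · dim (range P(t))`. -/
theorem stmt_14 {E : Type*} [NormedAddCommGroup E] [NormedSpace ℂ E]
    [CompleteSpace E] (P : ℝ → (E →L[ℂ] E)) (t : ℝ) (P' : E →L[ℂ] E)
    (hproj : ∀ s : ℝ, P s ∘L P s = P s)
    (hdiff : HasDerivAt P P' t)
    (hfin : FiniteDimensional ℂ (LinearMap.range (P t : E →ₗ[ℂ] E))) :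
    FiniteDimensional ℂ (LinearMap.range (P' : E →ₗ[ℂ] E)) ∧
      Module.finrank ℂ (LinearMap.range (P' : E →ₗ[ℂ] E))
        ≤ 2 * Module.finrank ℂ (LinearMap.range (P t : E →ₗ[ℂ] E)) := by
  -- differentiate P s * P s = P s
  have hmul : HasDerivAt (fun s => P s * P s) (P' * P t + P t * P') t :=
    hdiff.mul hdiff
  have heq : (fun s => P s * P s) = P := by
    funext s; exact hproj s
  rw [heq] at hmul
  have hP' : P' = P' * P t + P t * P' := hdiff.unique hmul
  set S := LinearMap.range (P t : E →ₗ[ℂ] E) with hS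
  have hle : LinearMap.range (P' : E →ₗ[ℂ] E) ≤ Submodule.map (P' : E →ₗ[ℂ] E) S ⊔ S := by
    rintro x ⟨y, rfl⟩
    have : P' y = P' (P t y) + P t (P' y) := by
      conv_lhs => rw [hP']
      rfl
    rw [ContinuousLinearMap.coe_coe, this]
    exact Submodule.add_mem_sup ⟨P t y, ⟨y, rfl⟩, rfl⟩ ⟨P' y, rfl⟩
  haveI : FiniteDimensional ℂ (Submodule.map (P' : E →ₗ[ℂ] E) S) :=
    Module.Finite.map S (P' : E →ₗ[ℂ] E)
  haveI : FiniteDimensional ℂ (Submodule.map (P' : E →ₗ[ℂ] E) S ⊔ S : Submodule ℂ E) :=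
    Submodule.finiteDimensional_sup _ _
  haveI hfd : FiniteDimensional ℂ (LinearMap.range (P' : E →ₗ[ℂ] E)) :=
    Submodule.finiteDimensional_of_le hle
  refine ⟨hfd, ?_⟩
  calc Module.finrank ℂ (LinearMap.range (P' : E →ₗ[ℂ] E))
      ≤ Module.finrank ℂ (Submodule.map (P' : E →ₗ[ℂ] E) S ⊔ S : Submodule ℂ E) :=
        Submodule.finrank_mono hle
    _ ≤ Module.finrank ℂ (Submodule.map (P' : E →ₗ[ℂ] E) S) + Module.finrank ℂ S :=
        le_of_add_le_of_nonneg_left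
          (Submodule.finrank_sup_add_finrank_inf_eq _ S).le (Nat.zero_le _)
    _ ≤ Module.finrank ℂ S + Module.finrank ℂ S :=
        Nat.add_le_add_right (Submodule.finrank_map_le _ _) _
    _ = 2 * Module.finrank ℂ S := (two_mul _).symm
end
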